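/- Transitivity of k-well-linkedness along k-better-linked sets: let G be a hypergraph, k an integer, let A ⊊ E(G) be k-better-linked in G, and let B ⊆ E(G ◁ A) be k-well-linked in G ◁ A. Then B ▷ A is k-well-linked in G. -/

import Mathlib

open Finset

variable {V E : Type} [Fintype V] [DecidableEq V] [Fintype E] [DecidableEq E]

/-- `V(A)`: the union of the vertex sets of the hyperedges in `A`. -/
def hVerts (inc : E → Finset V) (A : Finset E) : Finset V :=
  A.biUnion inc

/-- The border `bd(A) = V(A) ∩ V(Ā)` of a set of hyperedges. -/
def hBd (inc : E → Finset V) (A : Finset E) : Finset V :=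
  hVerts inc A ∩ hVerts inc Aᶜ

/-- The order function `λ(A) = |bd(A)|`. -/
def hLam (inc : E → Finset V) (A : Finset E) : ℕ :=
  (hBd inc A).card

/-- `A` is well-linked: for every bipartition `(B1, B2)` of `A`, `λ(B1) ≥ λ(A)` or
`λ(B2) ≥ λ(A)`. -/
def WellLinked (inc : E → Finset V) (A : Finset E) : Prop :=
  ∀ B1 B2 : Finset E, Disjoint B1 B2 → B1 ∪ B2 = A →
    hLam inc A ≤ hLam inc B1 ∨ hLam inc A ≤ hLam inc B2

/-- `A` is `k`-well-linked: for every bipartition `(B1, B2)` of `A`, either `λ(B1) ≥ λ(A)`,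
or `λ(B2) ≥ λ(A)`, or both `λ(B1) ≥ k` and `λ(B2) ≥ k`. -/
def KWellLinked (inc : E → Finset V) (k : ℕ) (A : Finset E) : Prop :=
  ∀ B1 B2 : Finset E, Disjoint B1 B2 → B1 ∪ B2 = A →
    hLam inc A ≤ hLam inc B1 ∨ hLam inc A ≤ hLam inc B2 ∨
      (k ≤ hLam inc B1 ∧ k ≤ hLam inc B2)

/-- `A` is `k`-better-linked: either `A` is well-linked, or `A` is `k`-well-linked and
`Ā` is well-linked. -/
def KBetterLinked (inc : E → Finset V) (k : ℕ) (A : Finset E) : Prop :=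
  WellLinked inc A ∨ (KWellLinked inc k A ∧ WellLinked inc Aᶜ)

/-- The incidence map of the hypergraph `G ◁ A`. -/
def quotInc (inc : E → Finset V) (A : Finset E) :
    Option {e : E // e ∉ A} → Finset V
  | none => hBd inc A
  | some e => inc e.val

/-- `B ▷ A`: the set of hyperedges of `G` corresponding to `B ⊆ E(G ◁ A)`. -/
def hPush (A : Finset E) (B : Finset (Option {e : E // e ∉ A})) : Finset E :=
  B.biUnion fun x => x.elim A fun e => {e.val}

set_option linter.unusedSectionVars false


lemma mem_hVerts {inc : E → Finset V} {S : Finset E} {v : V} :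
    v ∈ hVerts inc S ↔ ∃ e ∈ S, v ∈ inc e := by simp [hVerts]

lemma mem_hBd {inc : E → Finset V} {S : Finset E} {v : V} :
    v ∈ hBd inc S ↔ (∃ e ∈ S, v ∈ inc e) ∧ (∃ e, e ∉ S ∧ v ∈ inc e) := by
  simp [hBd, mem_hVerts]

lemma hLam_compl (inc : E → Finset V) (S : Finset E) : hLam inc Sᶜ = hLam inc S := by
  unfold hLam hBd
  rw [compl_compl, inter_comm]

lemma hLam_submod (inc : E → Finset V) (X Y : Finset E) :
    hLam inc (X ∪ Y) + hLam inc (X ∩ Y) ≤ hLam inc X + hLam inc Y := by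
  have h1 : hBd inc (X ∪ Y) ∪ hBd inc (X ∩ Y) ⊆ hBd inc X ∪ hBd inc Y := by
    intro v hv
    simp only [mem_union, mem_hBd, mem_inter, not_and_or] at hv ⊢
    rcases hv with ⟨⟨e, he, hve⟩, ⟨f, hf, hvf⟩⟩ | ⟨⟨e, he, hve⟩, ⟨f, hf, hvf⟩⟩
    · rcases he with h | h
      · exact Or.inl ⟨⟨e, h, hve⟩, ⟨f, fun hh => hf (Or.inl hh), hvf⟩⟩
      · exact Or.inr ⟨⟨e, h, hve⟩, ⟨f, fun hh => hf (Or.inr hh), hvf⟩⟩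
    · rcases hf with h | h
      · exact Or.inl ⟨⟨e, he.1, hve⟩, ⟨f, h, hvf⟩⟩
      · exact Or.inr ⟨⟨e, he.2, hve⟩, ⟨f, h, hvf⟩⟩
  have h2 : hBd inc (X ∪ Y) ∩ hBd inc (X ∩ Y) ⊆ hBd inc X ∩ hBd inc Y := by
    intro v hv
    simp only [mem_inter, mem_hBd, not_and_or] at hv ⊢
    obtain ⟨⟨_, ⟨f, hf, hvf⟩⟩, ⟨⟨e, he, hve⟩, _⟩⟩ := hv
    have hf1 : f ∉ X := fun hh => hf (mem_union_left _ hh)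
    have hf2 : f ∉ Y := fun hh => hf (mem_union_right _ hh)
    exact ⟨⟨⟨e, he.1, hve⟩, ⟨f, hf1, hvf⟩⟩,
      ⟨⟨e, he.2, hve⟩, ⟨f, hf2, hvf⟩⟩⟩
  calc hLam inc (X ∪ Y) + hLam inc (X ∩ Y)
      = (hBd inc (X ∪ Y) ∪ hBd inc (X ∩ Y)).card + (hBd inc (X ∪ Y) ∩ hBd inc (X ∩ Y)).card := by
        unfold hLam; rw [card_union_add_card_inter]
    _ ≤ (hBd inc X ∪ hBd inc Y).card + (hBd inc X ∩ hBd inc Y).card :=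
        Nat.add_le_add (card_le_card h1) (card_le_card h2)
    _ = hLam inc X + hLam inc Y := by unfold hLam; rw [card_union_add_card_inter]

lemma hLam_posimod (inc : E → Finset V) (X Y : Finset E) :
    hLam inc (X \ Y) + hLam inc (Y \ X) ≤ hLam inc X + hLam inc Y := by
  have h := hLam_submod inc X Yᶜ
  have e1 : X ∪ Yᶜ = (Y \ X)ᶜ := by ext e; simp; tauto
  have e2 : X ∩ Yᶜ = X \ Y := by ext e; simp
  rw [e1, e2, hLam_compl, hLam_compl inc Y] at h
  omega

lemma mem_hPush {A : Finset E} {C : Finset (Option {e : E // e ∉ A})} {e : E} :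
    e ∈ hPush A C ↔ (none ∈ C ∧ e ∈ A) ∨ ∃ a : {e' : E // e' ∉ A}, some a ∈ C ∧ a.1 = e := by
  simp only [hPush, mem_biUnion]
  constructor
  · rintro ⟨x, hx, he⟩
    cases x with
    | none => exact Or.inl ⟨hx, he⟩
    | some a =>
      simp only [Option.elim, mem_singleton] at he
      exact Or.inr ⟨a, hx, he.symm⟩
  · rintro (⟨h1, h2⟩ | ⟨a, ha, rfl⟩)
    · exact ⟨none, h1, h2⟩
    · exact ⟨some a, ha, by simp [Option.elim]⟩

lemma quot_hBd (inc : E → Finset V) (A : Finset E) (C : Finset (Option {e : E // e ∉ A})) :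
    hBd (quotInc inc A) C = hBd inc (hPush A C) := by
  ext v
  have hq : ∀ (D : Finset (Option {e : E // e ∉ A})),
      v ∈ hVerts (quotInc inc A) D ↔
        ((none ∈ D ∧ v ∈ hBd inc A) ∨ ∃ a : {e : E // e ∉ A}, some a ∈ D ∧ v ∈ inc a.1) := by
    intro D
    rw [mem_hVerts]
    constructor
    · rintro ⟨x, hx, hv⟩
      cases x with
      | none => exact Or.inl ⟨hx, hv⟩
      | some a => exact Or.inr ⟨a, hx, hv⟩
    · rintro (⟨h1, h2⟩ | ⟨a, ha, hv⟩)
      exacts [⟨none, h1, h2⟩, ⟨some a, ha, hv⟩]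
  constructor
  · intro hv
    rw [hBd, mem_inter, hq, hq] at hv
    obtain ⟨hv1, hv2⟩ := hv
    rw [mem_hBd]
    constructor
    · -- v ∈ V(hPush A C)
      rcases hv1 with ⟨hnc, hbd⟩ | ⟨a, ha, hva⟩
      · obtain ⟨⟨e, he, hve⟩, _⟩ := mem_hBd.mp hbd
        exact ⟨e, mem_hPush.mpr (Or.inl ⟨hnc, he⟩), hve⟩
      · exact ⟨a.1, mem_hPush.mpr (Or.inr ⟨a, ha, rfl⟩), hva⟩
    · -- ∃ e ∉ hPush A C with v ∈ inc e
      rcases hv2 with ⟨hnc, hbd⟩ | ⟨a, ha, hva⟩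
      · -- none ∈ Cᶜ, v ∈ bd A : take e ∈ A, e ∉ hPush A C since none ∉ C
        rw [mem_compl] at hnc
        obtain ⟨⟨e, he, hve⟩, _⟩ := mem_hBd.mp hbd
        refine ⟨e, fun hmem => ?_, hve⟩
        rcases mem_hPush.mp hmem with ⟨h1, _⟩ | ⟨a, _, rfl⟩
        · exact hnc h1
        · exact a.2 he
      · rw [mem_compl] at ha
        refine ⟨a.1, fun hmem => ?_, hva⟩
        rcases mem_hPush.mp hmem with ⟨_, h2⟩ | ⟨a', ha', hval⟩
        · exact a.2 h2
        · have : a' = a := Subtype.ext hval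
          exact ha (this ▸ ha')
  · intro hv
    obtain ⟨⟨e, he, hve⟩, ⟨f, hf, hvf⟩⟩ := mem_hBd.mp hv
    rw [hBd, mem_inter, hq, hq]
    -- facts about f : f ∉ hPush A C
    have hfA : f ∈ A → none ∉ C := fun h1 h2 => hf (mem_hPush.mpr (Or.inl ⟨h2, h1⟩))
    have hfB : ∀ h : f ∉ A, some ⟨f, h⟩ ∉ C := fun h hc =>
      hf (mem_hPush.mpr (Or.inr ⟨⟨f, h⟩, hc, rfl⟩))
    constructor
    · -- v ∈ V_Q(C)
      rcases mem_hPush.mp he with ⟨h1, h2⟩ | ⟨a, ha, rfl⟩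
      · -- e ∈ A, none ∈ C : show v ∈ bd A
        left
        refine ⟨h1, mem_hBd.mpr ⟨⟨e, h2, hve⟩, ⟨f, fun hfA' => ?_, hvf⟩⟩⟩
        exact hfA hfA' h1
      · exact Or.inr ⟨a, ha, hve⟩
    · -- v ∈ V_Q(Cᶜ)
      by_cases hfA' : f ∈ A
      · -- then none ∉ C; v ∈ bd A since v ∈ V(A) via f and v ∈ V(Aᶜ) via some edge
        left
        rw [mem_compl]
        refine ⟨hfA hfA', mem_hBd.mpr ⟨⟨f, hfA', hvf⟩, ?_⟩⟩
        -- need an edge outside A containing v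
        by_cases heA : e ∈ A
        · -- e ∈ A and e ∈ hPush A C: then none ∈ C, contradiction with hfA hfA'
          exfalso
          rcases mem_hPush.mp he with ⟨h1, _⟩ | ⟨a, _, rfl⟩
          · exact hfA hfA' h1
          · exact a.2 heA
        · exact ⟨e, heA, hve⟩
      · exact Or.inr ⟨⟨f, hfA'⟩, by rw [mem_compl]; exact hfB hfA', hvf⟩

lemma quot_hLam (inc : E → Finset V) (A : Finset E) (C : Finset (Option {e : E // e ∉ A})) :
    hLam (quotInc inc A) C = hLam inc (hPush A C) := by
  unfold hLam; rw [quot_hBd]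

def hLift (A S : Finset E) : Finset (Option {e : E // e ∉ A}) :=
  univ.filter fun x => ∃ a : {e : E // e ∉ A}, a.1 ∈ S ∧ x = some a

lemma mem_hLift {A S : Finset E} {x : Option {e : E // e ∉ A}} :
    x ∈ hLift A S ↔ ∃ a : {e : E // e ∉ A}, a.1 ∈ S ∧ x = some a := by
  simp [hLift]

lemma none_not_mem_hLift {A S : Finset E} : none ∉ hLift A S := by
  rw [mem_hLift]; rintro ⟨a, _, h⟩; exact nomatch h

lemma some_mem_hLift {A S : Finset E} {a : {e : E // e ∉ A}} :
    some a ∈ hLift A S ↔ a.1 ∈ S := by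
  rw [mem_hLift]
  constructor
  · rintro ⟨b, hb, h⟩
    injection h with h
    subst h
    exact hb
  · intro h; exact ⟨a, h, rfl⟩

lemma hLift_union {A S T : Finset E} : hLift A (S ∪ T) = hLift A S ∪ hLift A T := by
  ext x; simp only [mem_hLift, mem_union]; constructor
  · rintro ⟨a, ha | ha, rfl⟩
    exacts [Or.inl ⟨a, ha, rfl⟩, Or.inr ⟨a, ha, rfl⟩]
  · rintro (⟨a, ha, rfl⟩ | ⟨a, ha, rfl⟩)
    exacts [⟨a, Or.inl ha, rfl⟩, ⟨a, Or.inr ha, rfl⟩]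

lemma hPush_hLift {A S : Finset E} : hPush A (hLift A S) = S \ A := by
  ext e
  rw [mem_hPush, mem_sdiff]
  constructor
  · rintro (⟨h, _⟩ | ⟨a, ha, rfl⟩)
    · exact absurd h none_not_mem_hLift
    · exact ⟨(some_mem_hLift.mp ha), a.2⟩
  · rintro ⟨h1, h2⟩
    exact Or.inr ⟨⟨e, h2⟩, some_mem_hLift.mpr h1, rfl⟩

lemma hLift_hPush {A : Finset E} {C : Finset (Option {e : E // e ∉ A})} :
    hLift A (hPush A C) = C.erase none := by
  ext x
  rw [mem_hLift, mem_erase]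
  constructor
  · rintro ⟨a, ha, rfl⟩
    rcases mem_hPush.mp ha with ⟨_, h⟩ | ⟨a', ha', hval⟩
    · exact absurd h a.2
    · exact ⟨nofun, by rwa [Subtype.ext hval] at ha'⟩
  · rintro ⟨hx, hc⟩
    cases x with
    | none => exact absurd rfl hx
    | some a => exact ⟨a, mem_hPush.mpr (Or.inr ⟨a, hc, rfl⟩), rfl⟩

lemma hLift_disjoint {A S T : Finset E} (h : Disjoint S T) :
    Disjoint (hLift A S) (hLift A T) := by
  rw [disjoint_left]
  intro x hx hx'
  obtain ⟨a, ha, rfl⟩ := mem_hLift.mp hx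
  rw [some_mem_hLift] at hx'
  exact disjoint_left.mp h ha hx'

lemma hPush_insert_none {A : Finset E} {C : Finset (Option {e : E // e ∉ A})} :
    hPush A (insert none C) = A ∪ hPush A C := by
  by_cases h : none ∈ C
  · rw [insert_eq_of_mem h]
    have : A ⊆ hPush A C := fun e he => mem_hPush.mpr (Or.inl ⟨h, he⟩)
    rw [union_eq_right.mpr this]
  · unfold hPush
    rw [biUnion_insert]
    rfl

/-- If `k ≤ λ(S∩A)`, `k ≤ λ(A\S)` and `Aᶜ` is well-linked, then `k ≤ λ(S)`. -/
lemma k_bound (inc : E → Finset V) (k : ℕ) (A S : Finset E) (hwc : WellLinked inc Aᶜ)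
    (h1 : k ≤ hLam inc (S ∩ A)) (h2 : k ≤ hLam inc (A \ S)) : k ≤ hLam inc S := by
  have hp := hLam_posimod inc S A
  have hs := hLam_submod inc S A
  have hd : Disjoint (S \ A) (Aᶜ \ S) := by
    rw [disjoint_left]; intro e he he'
    exact (mem_sdiff.mp he').2 (mem_sdiff.mp he).1
  have hu : (S \ A) ∪ (Aᶜ \ S) = Aᶜ := by ext e; simp; tauto
  rcases hwc (S \ A) (Aᶜ \ S) hd hu with hw | hw
  · rw [hLam_compl] at hw
    -- λA ≤ λ(S\A); hp : λ(S\A)+λ(A\S) ≤ λS+λA; h2 : k ≤ λ(A\S)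
    omega
  · rw [hLam_compl] at hw
    have e1 : Aᶜ \ S = (S ∪ A)ᶜ := by rw [compl_union, sdiff_eq, inter_comm]; rfl
    rw [e1, hLam_compl] at hw
    -- λA ≤ λ(S∪A); hs : λ(S∪A)+λ(S∩A) ≤ λS+λA; h1 : k ≤ λ(S∩A)
    omega

lemma main_case (inc : E → Finset V) (k : ℕ) (A : Finset E)
    (B : Finset (Option {e : E // e ∉ A})) (hkwl : KWellLinked (quotInc inc A) k B)
    (B1 B2 : Finset E) (hdisj : Disjoint B1 B2) (hunion : B1 ∪ B2 = hPush A B)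
    (hnB : none ∈ B) (hA1 : hLam inc A ≤ hLam inc (B1 ∩ A)) :
    hLam inc (hPush A B) ≤ hLam inc B1 ∨ hLam inc (hPush A B) ≤ hLam inc B2 ∨
      (k ≤ hLam inc B1 ∧ k ≤ hLam inc B2) := by
  have hAD : A ⊆ hPush A B := fun e he => mem_hPush.mpr (Or.inl ⟨hnB, he⟩)
  -- A \ B2 = B1 ∩ A
  have hAB2 : A \ B2 = B1 ∩ A := by
    ext e
    rw [mem_sdiff, mem_inter]
    constructor
    · rintro ⟨ha, hb⟩
      have : e ∈ B1 ∪ B2 := hunion ▸ hAD ha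
      rcases mem_union.mp this with h | h
      · exact ⟨h, ha⟩
      · exact absurd h hb
    · rintro ⟨h1, h2⟩
      exact ⟨h2, disjoint_left.mp hdisj h1⟩
  have hp2 := hLam_posimod inc B2 A
  rw [hAB2] at hp2
  -- λ(B2\A) + λ(B1∩A) ≤ λB2 + λA, so λ(B2\A) ≤ λB2
  have hp1 := hLam_posimod inc B1ᶜ A
  have e1 : B1ᶜ \ A = (A ∪ B1)ᶜ := by ext e; simp; tauto
  have e2 : A \ B1ᶜ = B1 ∩ A := by ext e; simp [and_comm]
  rw [e1, e2, hLam_compl, hLam_compl] at hp1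
  -- λ(A∪B1) + λ(B1∩A) ≤ λB1 + λA
  -- now apply hkwl
  have hd : Disjoint (insert none (hLift A B1)) (hLift A B2) := by
    rw [disjoint_left]
    intro x hx hx'
    rcases mem_insert.mp hx with rfl | hx
    · exact none_not_mem_hLift hx'
    · exact disjoint_left.mp (hLift_disjoint hdisj) hx hx'
  have hu : insert none (hLift A B1) ∪ hLift A B2 = B := by
    rw [insert_union, ← hLift_union, hunion, hLift_hPush, insert_erase hnB]
  have htri := hkwl _ _ hd hu
  rw [quot_hLam, quot_hLam, quot_hLam, hPush_insert_none, hPush_hLift, hPush_hLift,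
    union_sdiff_self_eq_union] at htri
  -- htri : λ(hPush A B) ≤ λ(A ∪ B1) ∨ λ(hPush A B) ≤ λ(B2\A) ∨ (k ≤ λ(A∪B1) ∧ k ≤ λ(B2\A))
  rcases htri with h | h | ⟨h, h'⟩
  · left; omega
  · right; left; omega
  · right; right; constructor <;> omega

/-- Transitivity of `k`-well-linkedness along `k`-better-linked sets: if `A ⊊ E(G)` is
`k`-better-linked in `G` and `B ⊆ E(G ◁ A)` is `k`-well-linked in `G ◁ A`, then
`B ▷ A` is `k`-well-linked in `G`. -/
theorem kWellLinked_transitive (inc : E → Finset V)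
    (hcov : ∀ v : V, ∃ e : E, v ∈ inc e) (k : ℕ)
    (A : Finset E) (hA : A ≠ Finset.univ) (hbl : KBetterLinked inc k A)
    (B : Finset (Option {e : E // e ∉ A}))
    (hkwl : KWellLinked (quotInc inc A) k B) :
    KWellLinked inc k (hPush A B) := by
  intro B1 B2 hdisj hunion
  by_cases hnB : none ∈ B
  · -- Case e_A ∈ B
    have hAD : A ⊆ hPush A B := fun e he => mem_hPush.mpr (Or.inl ⟨hnB, he⟩)
    have hA12u : (B1 ∩ A) ∪ (B2 ∩ A) = A := by
      rw [← union_inter_distrib_right, hunion, inter_eq_right.mpr hAD]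
    have hA12d : Disjoint (B1 ∩ A) (B2 ∩ A) :=
      hdisj.mono inter_subset_left inter_subset_left
    have htri : hLam inc A ≤ hLam inc (B1 ∩ A) ∨ hLam inc A ≤ hLam inc (B2 ∩ A) ∨
        (k ≤ hLam inc (B1 ∩ A) ∧ k ≤ hLam inc (B2 ∩ A) ∧ WellLinked inc Aᶜ) := by
      rcases hbl with hw | ⟨hk, hwc⟩
      · rcases hw _ _ hA12d hA12u with h | h
        · exact Or.inl h
        · exact Or.inr (Or.inl h)
      · rcases hk _ _ hA12d hA12u with h | h | ⟨h1, h2⟩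
        · exact Or.inl h
        · exact Or.inr (Or.inl h)
        · exact Or.inr (Or.inr ⟨h1, h2, hwc⟩)
    rcases htri with h | h | ⟨h1, h2, hwc⟩
    · exact main_case inc k A B hkwl B1 B2 hdisj hunion hnB h
    · have := main_case inc k A B hkwl B2 B1 hdisj.symm (by rw [union_comm]; exact hunion) hnB h
      tauto
    · right; right
      have hAB1 : A \ B1 = B2 ∩ A := by
        ext e
        rw [mem_sdiff, mem_inter]
        constructor
        · rintro ⟨ha, hb⟩
          have : e ∈ B1 ∪ B2 := hunion ▸ hAD ha
          rcases mem_union.mp this with hh | hh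
          · exact absurd hh hb
          · exact ⟨hh, ha⟩
        · rintro ⟨hh1, hh2⟩
          exact ⟨hh2, disjoint_right.mp hdisj hh1⟩
      have hAB2 : A \ B2 = B1 ∩ A := by
        ext e
        rw [mem_sdiff, mem_inter]
        constructor
        · rintro ⟨ha, hb⟩
          have : e ∈ B1 ∪ B2 := hunion ▸ hAD ha
          rcases mem_union.mp this with hh | hh
          · exact ⟨hh, ha⟩
          · exact absurd hh hb
        · rintro ⟨hh1, hh2⟩
          exact ⟨hh2, disjoint_left.mp hdisj hh1⟩
      constructor
      · exact k_bound inc k A B1 hwc h1 (by rw [hAB1]; exact h2)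
      · exact k_bound inc k A B2 hwc h2 (by rw [hAB2]; exact h1)
  · -- Case e_A ∉ B
    have hDnA : ∀ e ∈ hPush A B, e ∉ A := by
      intro e he
      rcases mem_hPush.mp he with ⟨h, _⟩ | ⟨a, _, rfl⟩
      · exact absurd h hnB
      · exact a.2
    have hB1 : B1 \ A = B1 := by
      rw [Finset.sdiff_eq_self_iff_disjoint, disjoint_left]
      intro e he
      exact hDnA e (hunion ▸ mem_union_left B2 he)
    have hB2 : B2 \ A = B2 := by
      rw [Finset.sdiff_eq_self_iff_disjoint, disjoint_left]
      intro e he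
      exact hDnA e (hunion ▸ mem_union_right B1 he)
    have hu : hLift A B1 ∪ hLift A B2 = B := by
      rw [← hLift_union, hunion, hLift_hPush, erase_eq_of_notMem hnB]
    have htri := hkwl _ _ (hLift_disjoint hdisj) hu
    rw [quot_hLam, quot_hLam, quot_hLam, hPush_hLift, hPush_hLift, hB1, hB2] at htri
    exact htri
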